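/- Sandwiching lemma for entry times: if ‖T(t)‖ ≤ 1 for all t and F : ℝ ∪ {±∞} → [0,∞] is decreasing with F(∞) = 0, then Σ_{r=0}^∞ u_r F(r+1) ≤ ∫_0^∞ F(−log ‖T(t)‖) dt ≤ Σ_{r=0}^∞ u_r F(r). -/

import Mathlib

open scoped ENNReal
open Filter Topology MeasureTheory

/-- Final entry time of `x` into the ball of radius `e^{-r}`:
`t_r(x) = inf { t ≥ 0 : ‖T(t')x‖ ≤ e^{-r} for all t' ≥ t }`, with `inf ∅ = ∞`. -/
noncomputable def entryTime {X : Type*} [NormedAddCommGroup X] [NormedSpace ℝ X]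
    (T : ℝ → X →L[ℝ] X) (r : ℕ) (x : X) : ℝ≥0∞ :=
  sInf {t : ℝ≥0∞ | ∀ t' : ℝ, 0 ≤ t' → t ≤ ENNReal.ofReal t' →
    ‖T t' x‖ ≤ Real.exp (-(r : ℝ))}

/-- `t_r = sup { t_r(x) : ‖x‖ ≤ 1 }`. -/
noncomputable def ballEntryTime {X : Type*} [NormedAddCommGroup X] [NormedSpace ℝ X]
    (T : ℝ → X →L[ℝ] X) (r : ℕ) : ℝ≥0∞ :=
  ⨆ x ∈ {x : X | ‖x‖ ≤ 1}, entryTime T r x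

/-- Relative entry time `u_r = t_{r+1} - t_r`, with `u_r = ∞` when `t_{r+1} = ∞`. -/
noncomputable def relEntryTime {X : Type*} [NormedAddCommGroup X] [NormedSpace ℝ X]
    (T : ℝ → X →L[ℝ] X) (r : ℕ) : ℝ≥0∞ :=
  if ballEntryTime T (r + 1) = ⊤ then ⊤
  else ballEntryTime T (r + 1) - ballEntryTime T r

/-- `-log ‖T(t)‖` valued in the extended reals, with `-log 0 = ∞`. -/
noncomputable def negElogNorm {X : Type*} [NormedAddCommGroup X] [NormedSpace ℝ X]
    (T : ℝ → X →L[ℝ] X) (t : ℝ) : EReal :=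
  if ‖T t‖ = 0 then ⊤ else ((-Real.log ‖T t‖ : ℝ) : EReal)

namespace EntryTimeAux

variable {X : Type*} [NormedAddCommGroup X] [NormedSpace ℝ X]

/-- The entry-time defining set for the operator norm itself. -/
def opSet (T : ℝ → X →L[ℝ] X) (r : ℕ) : Set ℝ≥0∞ :=
  {t : ℝ≥0∞ | ∀ t' : ℝ, 0 ≤ t' → t ≤ ENNReal.ofReal t' → ‖T t'‖ ≤ Real.exp (-(r : ℝ))}

lemma sInf_Ioi_ennreal (a : ℝ≥0∞) : sInf (Set.Ioi a) = a := by
  refine le_antisymm ?_ (le_sInf fun b hb => (le_of_lt hb))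
  by_contra h
  push_neg at h
  obtain ⟨c, hc1, hc2⟩ := exists_between h
  exact absurd (sInf_le (Set.mem_Ioi.mpr hc1)) (not_le.mpr hc2)

lemma ballEntryTime_eq_sInf (T : ℝ → X →L[ℝ] X) (r : ℕ) :
    ballEntryTime T r = sInf (opSet T r) := by
  refine le_antisymm ?_ ?_
  · refine iSup₂_le fun x hx => sInf_le_sInf ?_
    intro t ht t' ht' htt'
    refine le_trans ((T t').le_opNorm x) ?_
    calc ‖T t'‖ * ‖x‖ ≤ ‖T t'‖ * 1 :=
          mul_le_mul_of_nonneg_left hx (norm_nonneg _)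
      _ = ‖T t'‖ := mul_one _
      _ ≤ Real.exp (-(r : ℝ)) := ht t' ht' htt'
  · have key : Set.Ioi (ballEntryTime T r) ⊆ opSet T r := by
      intro t ht t' ht' htt'
      refine (T t').opNorm_le_bound (Real.exp_pos _).le fun x => ?_
      rcases eq_or_ne x 0 with rfl | hx0
      · simp
      have hnx : ‖x‖ ≠ 0 := norm_ne_zero_iff.mpr hx0
      set y : X := ‖x‖⁻¹ • x with hy
      have hy1 : ‖y‖ ≤ 1 := by
        rw [hy, norm_smul, norm_inv, norm_norm, inv_mul_cancel₀ hnx]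
      have h1 : entryTime T r y ≤ ballEntryTime T r :=
        le_iSup_of_le y (le_iSup_of_le hy1 le_rfl)
      have h2 : entryTime T r y < ENNReal.ofReal t' :=
        lt_of_le_of_lt h1 (lt_of_lt_of_le ht htt')
      obtain ⟨s, hs, hslt⟩ := sInf_lt_iff.mp h2
      have hyb : ‖T t' y‖ ≤ Real.exp (-(r : ℝ)) := hs t' ht' hslt.le
      have hxy : x = ‖x‖ • y := by
        rw [hy, smul_smul, mul_inv_cancel₀ hnx, one_smul]
      calc ‖T t' x‖ = ‖x‖ * ‖T t' y‖ := by
            conv_lhs => rw [hxy]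
            rw [(T t').map_smul, norm_smul, Real.norm_eq_abs, abs_of_nonneg (norm_nonneg x)]
        _ ≤ ‖x‖ * Real.exp (-(r : ℝ)) :=
            mul_le_mul_of_nonneg_left hyb (norm_nonneg _)
        _ = Real.exp (-(r : ℝ)) * ‖x‖ := mul_comm _ _
    calc sInf (opSet T r) ≤ sInf (Set.Ioi (ballEntryTime T r)) := sInf_le_sInf key
      _ = ballEntryTime T r := sInf_Ioi_ennreal _

lemma norm_anti (T : ℝ → X →L[ℝ] X)
    (hTmul : ∀ s t : ℝ, 0 ≤ s → 0 ≤ t → T (s + t) = (T s).comp (T t))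
    (hcontr : ∀ t : ℝ, 0 ≤ t → ‖T t‖ ≤ 1)
    {s t : ℝ} (hs : 0 ≤ s) (hst : s ≤ t) : ‖T t‖ ≤ ‖T s‖ := by
  have h : T t = (T (t - s)).comp (T s) := by
    have := hTmul (t - s) s (by linarith) hs
    rwa [sub_add_cancel] at this
  rw [h]
  calc ‖(T (t - s)).comp (T s)‖ ≤ ‖T (t - s)‖ * ‖T s‖ := ContinuousLinearMap.opNorm_comp_le _ _
    _ ≤ 1 * ‖T s‖ := mul_le_mul_of_nonneg_right (hcontr _ (by linarith)) (norm_nonneg _)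
    _ = ‖T s‖ := one_mul _

lemma ball_mono (T : ℝ → X →L[ℝ] X) : Monotone (ballEntryTime T) := by
  refine monotone_nat_of_le_succ fun r => ?_
  rw [ballEntryTime_eq_sInf, ballEntryTime_eq_sInf]
  refine sInf_le_sInf fun t ht t' ht' htt' => le_trans (ht t' ht' htt') ?_
  exact Real.exp_le_exp.mpr (by push_cast; linarith)

lemma norm_le_of_lt (T : ℝ → X →L[ℝ] X) {r : ℕ} {t : ℝ} (ht : 0 ≤ t)
    (h : ballEntryTime T r < ENNReal.ofReal t) : ‖T t‖ ≤ Real.exp (-(r : ℝ)) := by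
  rw [ballEntryTime_eq_sInf] at h
  obtain ⟨s, hs, hslt⟩ := sInf_lt_iff.mp h
  exact hs t ht hslt.le

lemma ball_le_ofReal (T : ℝ → X →L[ℝ] X)
    (hTmul : ∀ s t : ℝ, 0 ≤ s → 0 ≤ t → T (s + t) = (T s).comp (T t))
    (hcontr : ∀ t : ℝ, 0 ≤ t → ‖T t‖ ≤ 1)
    {r : ℕ} {t : ℝ} (ht : 0 ≤ t) (h : ‖T t‖ ≤ Real.exp (-(r : ℝ))) :
    ballEntryTime T r ≤ ENNReal.ofReal t := by
  rw [ballEntryTime_eq_sInf]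
  refine sInf_le fun t' ht' htt' => ?_
  have htt : t ≤ t' := (ENNReal.ofReal_le_ofReal_iff ht').mp htt'
  exact le_trans (norm_anti T hTmul hcontr ht htt) h

end EntryTimeAux

/-- Sandwiching lemma: for a contraction C₀-semigroup with `t_0 = 0` and `F`
nonincreasing on the extended reals with `F(∞) = 0`,
`Σ_r u_r F(r+1) ≤ ∫_0^∞ F(-log ‖T(t)‖) dt ≤ Σ_r u_r F(r)`. -/
theorem entryTime_sandwich {X : Type*} [NormedAddCommGroup X]
    [NormedSpace ℝ X] (T : ℝ → X →L[ℝ] X)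
    (hT0 : T 0 = 1)
    (hTmul : ∀ s t : ℝ, 0 ≤ s → 0 ≤ t → T (s + t) = (T s).comp (T t))
    (hTcont : ∀ x : X, ContinuousOn (fun t => T t x) (Set.Ici 0))
    (hcontr : ∀ t : ℝ, 0 ≤ t → ‖T t‖ ≤ 1)
    (ht0 : ballEntryTime T 0 = 0)
    (F : EReal → ℝ≥0∞) (hF : Antitone F) (hFtop : F ⊤ = 0) :
    (∑' r : ℕ, relEntryTime T r * F (((r : ℝ) + 1 : ℝ) : EReal)) ≤
      (∫⁻ t in Set.Ioi (0 : ℝ), F (negElogNorm T t)) ∧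
    (∫⁻ t in Set.Ioi (0 : ℝ), F (negElogNorm T t)) ≤
      ∑' r : ℕ, relEntryTime T r * F (((r : ℝ) : ℝ) : EReal) := by
  classical
  set τ : ℕ → ℝ≥0∞ := fun r => ballEntryTime T r with hτdef
  set f : ℝ → ℝ≥0∞ := fun t => F (negElogNorm T t) with hfdef
  have hτmono : Monotone τ := EntryTimeAux.ball_mono T
  -- basic positivity transfer
  have hmem_pos : ∀ {r : ℕ} {t : ℝ}, τ r < ENNReal.ofReal t → 0 < t := by
    intro r t h
    exact ENNReal.ofReal_pos.mp (lt_of_le_of_lt zero_le h)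
  -- key sets
  set I : ℕ → Set ℝ := fun r => ENNReal.ofReal ⁻¹' Set.Ioc (τ r) (τ (r + 1)) with hIdef
  set K : ℕ → Set ℝ := fun r => ENNReal.ofReal ⁻¹' Set.Ioo (τ r) (τ (r + 1)) with hKdef
  set Z : Set ℝ := ⋂ r : ℕ, ENNReal.ofReal ⁻¹' Set.Ioi (τ r) with hZdef
  have hImeas : ∀ r, MeasurableSet (I r) := fun r =>
    ENNReal.measurable_ofReal measurableSet_Ioc
  have hKmeas : ∀ r, MeasurableSet (K r) := fun r =>
    ENNReal.measurable_ofReal measurableSet_Ioo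
  have hZmeas : MeasurableSet Z :=
    MeasurableSet.iInter fun r => ENNReal.measurable_ofReal measurableSet_Ioi
  -- integrand bounds
  have hfI : ∀ r, ∀ t ∈ I r, f t ≤ F (((r : ℝ) : ℝ) : EReal) := by
    intro r t ht
    have htpos : 0 < t := hmem_pos ht.1
    have hnorm : ‖T t‖ ≤ Real.exp (-(r : ℝ)) := EntryTimeAux.norm_le_of_lt T htpos.le ht.1
    have harg : (((r : ℝ) : ℝ) : EReal) ≤ negElogNorm T t := by
      unfold negElogNorm
      split_ifs with h0
      · exact le_top
      · have hpos : 0 < ‖T t‖ := lt_of_le_of_ne (norm_nonneg _) (Ne.symm h0)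
        have : Real.log ‖T t‖ ≤ -(r : ℝ) := by
          calc Real.log ‖T t‖ ≤ Real.log (Real.exp (-(r : ℝ))) := Real.log_le_log hpos hnorm
            _ = -(r : ℝ) := Real.log_exp _
        exact EReal.coe_le_coe_iff.mpr (by linarith)
    exact hF harg
  have hfK : ∀ r, ∀ t ∈ K r, F (((r : ℝ) + 1 : ℝ) : EReal) ≤ f t := by
    intro r t ht
    have htpos : 0 < t := hmem_pos ht.1
    have hnorm : Real.exp (-((r : ℝ) + 1)) < ‖T t‖ := by
      by_contra h
      push_neg at h
      have h' : ‖T t‖ ≤ Real.exp (-((r + 1 : ℕ) : ℝ)) := by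
        rw [show ((r + 1 : ℕ) : ℝ) = (r : ℝ) + 1 by push_cast; ring]; exact h
      exact absurd (EntryTimeAux.ball_le_ofReal T hTmul hcontr htpos.le h') (not_le.mpr ht.2)
    have hpos : 0 < ‖T t‖ := lt_trans (Real.exp_pos _) hnorm
    have harg : negElogNorm T t ≤ (((r : ℝ) + 1 : ℝ) : EReal) := by
      unfold negElogNorm
      rw [if_neg hpos.ne']
      have : -((r : ℝ) + 1) < Real.log ‖T t‖ := by
        calc -((r : ℝ) + 1) = Real.log (Real.exp (-((r : ℝ) + 1))) := (Real.log_exp _).symm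
          _ < Real.log ‖T t‖ := Real.log_lt_log (Real.exp_pos _) hnorm
      exact EReal.coe_le_coe_iff.mpr (by linarith)
    exact hF harg
  have hfZ : ∀ t ∈ Z ∩ Set.Ioi (0 : ℝ), f t = 0 := by
    intro t ht
    have htpos : (0 : ℝ) < t := ht.2
    have hall : ∀ r : ℕ, ‖T t‖ ≤ Real.exp (-(r : ℝ)) := fun r =>
      EntryTimeAux.norm_le_of_lt T htpos.le (Set.mem_iInter.mp ht.1 r)
    have htend : Filter.Tendsto (fun r : ℕ => Real.exp (-(r : ℝ))) atTop (𝓝 0) :=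
      Real.tendsto_exp_neg_atTop_nhds_zero.comp tendsto_natCast_atTop_atTop
    have hle0 : ‖T t‖ ≤ 0 := ge_of_tendsto htend (Filter.Eventually.of_forall hall)
    have h0 : ‖T t‖ = 0 := le_antisymm hle0 (norm_nonneg _)
    show F (negElogNorm T t) = 0
    rw [negElogNorm, if_pos h0, hFtop]
  -- subset facts
  have hKsub : ∀ r, K r ⊆ Set.Ioi (0 : ℝ) := fun r t ht => hmem_pos ht.1
  -- measure computations
  have hμK_top : ∀ r, τ r ≠ ⊤ → τ (r + 1) = ⊤ → volume (K r) = ⊤ := by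
    intro r hr hr1
    have hKeq : K r = Set.Ioi (τ r).toReal := by
      ext t
      simp only [hKdef, Set.mem_preimage, Set.mem_Ioo, Set.mem_Ioi, hr1]
      constructor
      · intro ⟨h1, _⟩; exact (ENNReal.lt_ofReal_iff_toReal_lt hr).mp h1
      · intro h
        exact ⟨(ENNReal.lt_ofReal_iff_toReal_lt hr).mpr h, lt_of_le_of_ne le_top ENNReal.ofReal_ne_top⟩
    rw [hKeq, Real.volume_Ioi]
  have hofReal_sub : ∀ (a b : ℝ≥0∞), a ≤ b → b ≠ ⊤ →
      ENNReal.ofReal (b.toReal - a.toReal) = b - a := by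
    intro a b hab hb
    have ha : a ≠ ⊤ := fun h => hb (top_le_iff.mp (h ▸ hab))
    rw [← ENNReal.toReal_sub_of_le hab hb, ENNReal.ofReal_toReal]
    exact ENNReal.sub_ne_top hb
  have hμK_fin : ∀ r, τ (r + 1) ≠ ⊤ → volume (K r) = τ (r + 1) - τ r := by
    intro r hr1
    have hr : τ r ≠ ⊤ := fun h => hr1 (top_le_iff.mp (h ▸ hτmono (Nat.le_succ r)))
    have hKeq : K r = Set.Ioo (τ r).toReal (τ (r + 1)).toReal := by
      ext t
      simp only [hKdef, Set.mem_preimage, Set.mem_Ioo]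
      constructor
      · intro ⟨h1, h2⟩
        have ht1 : (τ r).toReal < t := (ENNReal.lt_ofReal_iff_toReal_lt hr).mp h1
        have ht0 : 0 ≤ t := le_trans ENNReal.toReal_nonneg ht1.le
        exact ⟨ht1, (ENNReal.ofReal_lt_iff_lt_toReal ht0 hr1).mp h2⟩
      · intro ⟨h1, h2⟩
        have ht0 : 0 ≤ t := le_trans ENNReal.toReal_nonneg h1.le
        exact ⟨(ENNReal.lt_ofReal_iff_toReal_lt hr).mpr h1,
          (ENNReal.ofReal_lt_iff_lt_toReal ht0 hr1).mpr h2⟩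
    rw [hKeq, Real.volume_Ioo, hofReal_sub _ _ (hτmono (Nat.le_succ r)) hr1]
  have hμI_le : ∀ r, volume (I r) ≤ relEntryTime T r := by
    intro r
    by_cases hr1 : τ (r + 1) = ⊤
    · rw [relEntryTime, if_pos hr1]; exact le_top
    · rw [relEntryTime, if_neg hr1]
      have hr : τ r ≠ ⊤ := fun h => hr1 (top_le_iff.mp (h ▸ hτmono (Nat.le_succ r)))
      have hsub : I r ⊆ Set.Ioc (τ r).toReal (τ (r + 1)).toReal := by
        intro t ⟨h1, h2⟩
        have ht1 : (τ r).toReal < t := (ENNReal.lt_ofReal_iff_toReal_lt hr).mp h1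
        exact ⟨ht1, (ENNReal.ofReal_le_iff_le_toReal hr1).mp h2⟩
      calc volume (I r) ≤ volume (Set.Ioc (τ r).toReal (τ (r + 1)).toReal) :=
            measure_mono hsub
        _ = ENNReal.ofReal ((τ (r + 1)).toReal - (τ r).toReal) := Real.volume_Ioc
        _ = τ (r + 1) - τ r := hofReal_sub _ _ (hτmono (Nat.le_succ r)) hr1
  -- disjointness of the K r
  have hKdisj : Pairwise (Function.onFun Disjoint K) := by
    have key : ∀ i j : ℕ, i < j → Disjoint (K i) (K j) := by
      intro i j hij
      rw [Set.disjoint_left]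
      intro t hti htj
      have h1 : ENNReal.ofReal t < τ (i + 1) := hti.2
      have h2 : τ j < ENNReal.ofReal t := htj.1
      exact absurd (lt_of_le_of_lt (hτmono hij) h2) (not_lt.mpr h1.le)
    intro i j hij
    rcases hij.lt_or_gt with h | h
    · exact key i j h
    · exact (key j i h).symm
  -- covering of Ioi 0
  have hcover : Set.Ioi (0 : ℝ) ⊆ (⋃ r, I r) ∪ (Z ∩ Set.Ioi (0 : ℝ)) := by
    intro t ht
    by_cases h : ∀ r : ℕ, τ r < ENNReal.ofReal t
    · exact Or.inr ⟨Set.mem_iInter.mpr fun r => h r, ht⟩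
    · left
      push_neg at h
      have hex : ∃ r : ℕ, ENNReal.ofReal t ≤ τ r := by
        obtain ⟨r, hr⟩ := h; exact ⟨r, hr⟩
      set N := Nat.find hex with hNdef
      have hN : ENNReal.ofReal t ≤ τ N := Nat.find_spec hex
      have hN0 : N ≠ 0 := by
        intro h0
        rw [h0] at hN
        have : τ 0 = 0 := ht0
        rw [this] at hN
        exact absurd (le_antisymm hN zero_le) (ENNReal.ofReal_pos.mpr ht).ne'
      obtain ⟨M, hM⟩ := Nat.exists_eq_succ_of_ne_zero hN0
      refine Set.mem_iUnion.mpr ⟨M, ?_, ?_⟩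
      · have := Nat.find_min hex (hNdef ▸ hM ▸ Nat.lt_succ_self M)
        exact not_le.mp this
      · rw [← Nat.succ_eq_add_one, ← hM]; exact hN
  -- core lower bound
  have hcore : (∑' r : ℕ, F (((r : ℝ) + 1 : ℝ) : EReal) * volume (K r)) ≤
      ∫⁻ t in Set.Ioi (0 : ℝ), f t := by
    calc (∑' r : ℕ, F (((r : ℝ) + 1 : ℝ) : EReal) * volume (K r))
        = ∑' r : ℕ, ∫⁻ _ in K r, F (((r : ℝ) + 1 : ℝ) : EReal) := by
          refine tsum_congr fun r => ?_
          rw [setLIntegral_const]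
      _ ≤ ∑' r : ℕ, ∫⁻ t in K r, f t := by
          refine ENNReal.tsum_le_tsum fun r => lintegral_mono_ae ?_
          exact (ae_restrict_iff' (hKmeas r)).mpr (Filter.Eventually.of_forall (hfK r))
      _ = ∫⁻ t in ⋃ r, K r, f t := (lintegral_iUnion hKmeas hKdisj f).symm
      _ ≤ ∫⁻ t in Set.Ioi (0 : ℝ), f t := lintegral_mono_set (Set.iUnion_subset hKsub)
  constructor
  · -- lower bound
    by_cases htopall : ∀ r : ℕ, τ r ≠ ⊤
    · refine le_trans (le_of_eq (tsum_congr fun r => ?_)) hcore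
      rw [relEntryTime, if_neg (htopall (r + 1)), ← hμK_fin r (htopall (r + 1)), mul_comm]
    · push_neg at htopall
      set r₀ := Nat.find htopall with hr₀def
      have hr₀ : τ r₀ = ⊤ := Nat.find_spec htopall
      have hr₀0 : r₀ ≠ 0 := by
        intro h0
        rw [h0] at hr₀
        exact absurd hr₀ (by rw [show τ 0 = 0 from ht0]; simp)
      obtain ⟨M, hM⟩ := Nat.exists_eq_succ_of_ne_zero hr₀0
      have hτM : τ M ≠ ⊤ := Nat.find_min htopall (hr₀def ▸ hM ▸ Nat.lt_succ_self M)
      have hτM1 : τ (M + 1) = ⊤ := by rw [← Nat.succ_eq_add_one, ← hM]; exact hr₀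
      by_cases hc0 : F (((M : ℝ) + 1 : ℝ) : EReal) = 0
      · refine le_trans (ENNReal.tsum_le_tsum fun r => ?_) hcore
        rcases lt_or_ge r M with hrM | hrM
        · have hfin : τ (r + 1) ≠ ⊤ := fun h =>
            hτM (top_le_iff.mp (h ▸ hτmono (Nat.succ_le_of_lt hrM)))
          rw [relEntryTime, if_neg hfin, ← hμK_fin r hfin, mul_comm]
        · have hFz : F (((r : ℝ) + 1 : ℝ) : EReal) = 0 := by
            refine le_antisymm (le_trans (hF ?_) (le_of_eq hc0)) zero_le
            refine EReal.coe_le_coe_iff.mpr ?_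
            have := (Nat.cast_le (α := ℝ)).mpr hrM
            linarith
          rw [hFz, mul_zero]
          exact zero_le
      · -- the integral is infinite
        have hμKM : volume (K M) = ⊤ := hμK_top M hτM hτM1
        have hint : ∫⁻ t in Set.Ioi (0 : ℝ), f t = ⊤ := by
          refine top_le_iff.mp ?_
          calc (⊤ : ℝ≥0∞) = F (((M : ℝ) + 1 : ℝ) : EReal) * volume (K M) := by
                rw [hμKM, ENNReal.mul_top hc0]
            _ ≤ ∑' r : ℕ, F (((r : ℝ) + 1 : ℝ) : EReal) * volume (K r) :=
                ENNReal.le_tsum M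
            _ ≤ ∫⁻ t in Set.Ioi (0 : ℝ), f t := hcore
        rw [hint]
        exact le_top
  · -- upper bound
    calc (∫⁻ t in Set.Ioi (0 : ℝ), f t)
        ≤ ∫⁻ t in (⋃ r, I r) ∪ (Z ∩ Set.Ioi (0 : ℝ)), f t := lintegral_mono_set hcover
      _ ≤ (∫⁻ t in ⋃ r, I r, f t) + ∫⁻ t in Z ∩ Set.Ioi (0 : ℝ), f t :=
          lintegral_union_le _ _ _
      _ ≤ (∑' r : ℕ, ∫⁻ t in I r, f t) + 0 := by
          refine add_le_add (lintegral_iUnion_le _ _) ?_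
          calc (∫⁻ t in Z ∩ Set.Ioi (0 : ℝ), f t)
              ≤ ∫⁻ _ in Z ∩ Set.Ioi (0 : ℝ), (0 : ℝ≥0∞) := by
                refine lintegral_mono_ae ?_
                exact (ae_restrict_iff' (hZmeas.inter measurableSet_Ioi)).mpr
                  (Filter.Eventually.of_forall fun t ht => le_of_eq (hfZ t ht))
            _ = 0 := lintegral_zero
      _ = ∑' r : ℕ, ∫⁻ t in I r, f t := add_zero _
      _ ≤ ∑' r : ℕ, relEntryTime T r * F (((r : ℝ) : ℝ) : EReal) := by
          refine ENNReal.tsum_le_tsum fun r => ?_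
          calc (∫⁻ t in I r, f t)
              ≤ ∫⁻ _ in I r, F (((r : ℝ) : ℝ) : EReal) := by
                refine lintegral_mono_ae ?_
                exact (ae_restrict_iff' (hImeas r)).mpr (Filter.Eventually.of_forall (hfI r))
            _ = F (((r : ℝ) : ℝ) : EReal) * volume (I r) := setLIntegral_const _ _
            _ ≤ F (((r : ℝ) : ℝ) : EReal) * relEntryTime T r :=
                mul_le_mul_right (hμI_le r) _
            _ = relEntryTime T r * F (((r : ℝ) : ℝ) : EReal) := mul_comm _ _
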